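/- arXiv:1307.6429 — 3 statements merged into one kernel-verified Lean document; each statement's English description precedes it below -/
import Mathlib

section
/- Let A ∈ ℬ ≤ Hom(V, V') and let W* be the limit of the second Wong sequence of (⟨A⟩, ℬ). Then there exists a corank(A)-singularity witness of ℬ if and only if W* ⊆ im(A). In that case A is of maximum rank in ℬ, and A⁻¹(W*) is a corank(ℬ)-singularity witness. -/
open Submodule Module

variable {F V V' : Type*} [Field F] [AddCommGroup V] [Module F V]
  [AddCommGroup V'] [Module F V']

/-- The image of a subspace `U` under a matrix space `A`: the span of all `a u`. -/
def msImage (A : Submodule F (V →ₗ[F] V')) (U : Submodule F V) : Submodule F V' :=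
  Submodule.span F {x | ∃ a ∈ A, ∃ u ∈ U, a u = x}

lemma msImage_mono (ℬ : Submodule F (V →ₗ[F] V')) {U U' : Submodule F V} (h : U ≤ U') :
    msImage ℬ U ≤ msImage ℬ U' := by
  apply Submodule.span_mono
  rintro x ⟨a, ha, u, hu, rfl⟩
  exact ⟨a, ha, u, h hu, rfl⟩

lemma map_le_msImage (ℬ : Submodule F (V →ₗ[F] V')) {B : V →ₗ[F] V'} (hB : B ∈ ℬ)
    (U : Submodule F V) : U.map B ≤ msImage ℬ U := by
  rintro x ⟨u, hu, rfl⟩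
  exact Submodule.subset_span ⟨B, hB, u, hu, rfl⟩

lemma msImage_le {ℬ : Submodule F (V →ₗ[F] V')} {U : Submodule F V} {X : Submodule F V'}
    (h : ∀ B ∈ ℬ, U.map B ≤ X) : msImage ℬ U ≤ X := by
  apply Submodule.span_le.mpr
  rintro x ⟨a, ha, u, hu, rfl⟩
  exact h a ha ⟨u, hu, rfl⟩

/-- rank-nullity for a restriction. -/
lemma finrank_map_add_finrank_inf_ker [FiniteDimensional F V]
    (A : V →ₗ[F] V') (U : Submodule F V) :
    finrank F (U.map A) + finrank F (LinearMap.ker A ⊓ U : Submodule F V) = finrank F U := by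
  have h := LinearMap.finrank_range_add_finrank_ker (A.domRestrict U)
  rw [LinearMap.range_domRestrict, LinearMap.ker_domRestrict] at h
  have e : (comap U.subtype (LinearMap.ker A)) ≃ₗ[F]
      (map U.subtype (comap U.subtype (LinearMap.ker A))) :=
    Submodule.equivMapOfInjective U.subtype U.injective_subtype _
  rw [Submodule.map_comap_subtype] at e
  rw [h.symm, e.finrank_eq, inf_comm]

theorem stmt8 [FiniteDimensional F V] [FiniteDimensional F V']
    (ℬ : Submodule F (V →ₗ[F] V')) (A : V →ₗ[F] V') (hA : A ∈ ℬ)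
    -- second Wong sequence of (⟨A⟩, ℬ)
    (W : ℕ → Submodule F V')
    (hW0 : W 0 = ⊥)
    (hWs : ∀ i, W (i + 1) = msImage ℬ ((W i).comap A))
    -- W N is the limit of the sequence
    (N : ℕ) (hlim : ∀ i, W i ≤ W N) :
    -- a corank(A)-singularity witness exists iff the limit lies in im(A)
    ((∃ U : Submodule F V,
        finrank F (msImage ℬ U) + finrank F (LinearMap.ker A) ≤ finrank F U) ↔
      W N ≤ LinearMap.range A) ∧
    -- in that case, A has maximum rank in ℬ and A⁻¹(W*) is a
    -- corank(ℬ)-singularity witness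
    (W N ≤ LinearMap.range A →
      (∀ B ∈ ℬ, finrank F (LinearMap.range B) ≤ finrank F (LinearMap.range A)) ∧
      finrank F (msImage ℬ ((W N).comap A)) + finrank F (LinearMap.ker A) ≤
        finrank F ((W N).comap A)) := by
  -- forward direction: a witness forces W N ≤ range A
  have forward : (∃ U : Submodule F V,
      finrank F (msImage ℬ U) + finrank F (LinearMap.ker A) ≤ finrank F U) →
      W N ≤ LinearMap.range A := by
    rintro ⟨U, hU⟩
    have hrn := finrank_map_add_finrank_inf_ker A U
    have hmaple : U.map A ≤ msImage ℬ U := map_le_msImage ℬ hA U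
    have h1 : finrank F (U.map A) ≤ finrank F (msImage ℬ U) := Submodule.finrank_mono hmaple
    have h2 : finrank F (LinearMap.ker A ⊓ U : Submodule F V) ≤ finrank F (LinearMap.ker A) :=
      Submodule.finrank_mono inf_le_left
    -- equality of the two finrank bounds
    have hk : finrank F (LinearMap.ker A ⊓ U : Submodule F V) = finrank F (LinearMap.ker A) := by
      omega
    have hm : finrank F (U.map A) = finrank F (msImage ℬ U) := by omega
    have hkerU : LinearMap.ker A ≤ U := by
      have : LinearMap.ker A ⊓ U = LinearMap.ker A :=
        Submodule.eq_of_le_of_finrank_le inf_le_left hk.ge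
      rw [← this]; exact inf_le_right
    have hmsI : msImage ℬ U = U.map A :=
      (Submodule.eq_of_le_of_finrank_le hmaple hm.ge).symm
    -- induction: W i ≤ U.map A
    have key : ∀ i, W i ≤ U.map A := by
      intro i
      induction i with
      | zero => rw [hW0]; exact bot_le
      | succ i ih =>
        rw [hWs i]
        have : (W i).comap A ≤ U := by
          calc (W i).comap A ≤ (U.map A).comap A := Submodule.comap_mono ih
          _ = U ⊔ LinearMap.ker A := Submodule.comap_map_eq A U
          _ = U := sup_eq_left.mpr hkerU
        calc msImage ℬ ((W i).comap A) ≤ msImage ℬ U := msImage_mono ℬ this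
        _ = U.map A := hmsI
    exact (key N).trans (LinearMap.map_le_range)
  -- the sequence is monotone, so W N is a fixed point
  have mono : ∀ i, W i ≤ W (i + 1) := by
    intro i
    induction i with
    | zero => rw [hW0]; exact bot_le
    | succ i ih =>
      rw [hWs i, hWs (i + 1)]
      exact msImage_mono ℬ (Submodule.comap_mono ih)
  have hfix : msImage ℬ ((W N).comap A) = W N := by
    rw [← hWs N]
    exact le_antisymm (hlim (N + 1)) (mono N)
  -- the reverse direction: W N ≤ range A gives all the conclusions
  have back : W N ≤ LinearMap.range A →
      (∀ B ∈ ℬ, finrank F (LinearMap.range B) ≤ finrank F (LinearMap.range A)) ∧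
      finrank F (msImage ℬ ((W N).comap A)) + finrank F (LinearMap.ker A) ≤
        finrank F ((W N).comap A) := by
    intro hle
    set U : Submodule F V := (W N).comap A with hUdef
    have hker : LinearMap.ker A ≤ U := by
      intro x hx
      simp only [hUdef, Submodule.mem_comap, LinearMap.mem_ker.mp hx]
      exact (W N).zero_mem
    have hmap : U.map A = W N := by
      rw [hUdef, Submodule.map_comap_eq, inf_eq_right.mpr hle]
    have hrn := finrank_map_add_finrank_inf_ker A U
    rw [hmap, inf_eq_left.mpr hker] at hrn
    -- finrank U = finrank (W N) + finrank ker A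
    have hwit : finrank F (msImage ℬ U) + finrank F (LinearMap.ker A) ≤ finrank F U := by
      rw [hfix, hrn]
    refine ⟨?_, hwit⟩
    intro B hB
    have hrnB := finrank_map_add_finrank_inf_ker B U
    have hBle : finrank F (U.map B) ≤ finrank F (W N) := by
      rw [← hfix]
      exact Submodule.finrank_mono (map_le_msImage ℬ hB U)
    have hKB : finrank F (LinearMap.ker A) ≤
        finrank F (LinearMap.ker B ⊓ U : Submodule F V) := by omega
    have hKB2 : finrank F (LinearMap.ker A) ≤ finrank F (LinearMap.ker B) :=
      hKB.trans (Submodule.finrank_mono inf_le_left)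
    have hA' := LinearMap.finrank_range_add_finrank_ker A
    have hB' := LinearMap.finrank_range_add_finrank_ker B
    omega
  exact ⟨⟨forward, fun h => ⟨(W N).comap A, (back h).2⟩⟩, back⟩
end

section
/- Let A ∈ ℬ ≤ Hom(V, V') and suppose U ≤ V is a corank(A)-singularity witness of ℬ, i.e., dim(U) − dim(ℬ(U)) ≥ dim ker(A). Then A(U) = ℬ(U), ker(A) ⊆ U, and U = A⁻¹(A(U)). -/
open Submodule Module

variable {F V V' : Type*} [Field F] [AddCommGroup V] [Module F V]
  [AddCommGroup V'] [Module F V']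

lemma aux_rank [FiniteDimensional F V] [FiniteDimensional F V'] (A : V →ₗ[F] V')
    (W : Submodule F V) :
    finrank F (Submodule.map A W) + finrank F (LinearMap.ker A ⊓ W : Submodule F V)
      = finrank F W := by
  have h := LinearMap.finrank_range_add_finrank_ker (A.domRestrict W)
  rw [LinearMap.range_domRestrict, LinearMap.ker_domRestrict] at h
  rw [← h, ← Submodule.finrank_map_subtype_eq W (Submodule.comap W.subtype (LinearMap.ker A)),
    Submodule.map_comap_subtype, inf_comm]

theorem stmt10 [FiniteDimensional F V] [FiniteDimensional F V']
    (ℬ : Submodule F (V →ₗ[F] V')) (A : V →ₗ[F] V') (hA : A ∈ ℬ)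
    (U : Submodule F V)
    (hwit : finrank F (msImage ℬ U) + finrank F (LinearMap.ker A) ≤ finrank F U) :
    Submodule.map A U = msImage ℬ U ∧
    LinearMap.ker A ≤ U ∧
    U = (Submodule.map A U).comap A := by
  have hle : Submodule.map A U ≤ msImage ℬ U := by
    rintro _ ⟨u, hu, rfl⟩
    exact Submodule.subset_span ⟨A, hA, u, hu, rfl⟩
  have hU := aux_rank A U
  have hkerle : finrank F (LinearMap.ker A ⊓ U : Submodule F V) ≤ finrank F (LinearMap.ker A) :=
    Submodule.finrank_mono inf_le_left
  have hmaple : finrank F (Submodule.map A U) ≤ finrank F (msImage ℬ U) :=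
    Submodule.finrank_mono hle
  have h1 : Submodule.map A U = msImage ℬ U :=
    Submodule.eq_of_le_of_finrank_le hle (by omega)
  have h2 : LinearMap.ker A ≤ U := by
    have : LinearMap.ker A ⊓ U = LinearMap.ker A :=
      Submodule.eq_of_le_of_finrank_le inf_le_left (by omega)
    rw [← this]; exact inf_le_right
  refine ⟨h1, h2, ?_⟩
  have hUle : U ≤ (Submodule.map A U).comap A := fun x hx =>
    Submodule.mem_map_of_mem hx
  refine Submodule.eq_of_le_of_finrank_le hUle ?_
  have hC := aux_rank A ((Submodule.map A U).comap A)
  have hmle : finrank F (Submodule.map A ((Submodule.map A U).comap A))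
      ≤ finrank F (Submodule.map A U) :=
    Submodule.finrank_mono (Submodule.map_comap_le A _)
  have hk2 : finrank F (LinearMap.ker A ⊓ (Submodule.map A U).comap A : Submodule F V)
      ≤ finrank F (LinearMap.ker A) := Submodule.finrank_mono inf_le_left
  omega
end

section
/- Assume |𝔽| > n and let A, B be linear maps V → V' with dim V = n. Then A is of maximum rank in the pencil ⟨A, B⟩ if and only if for all i ∈ [n], (BA')^i(ker(AA')) ⊆ im(A), where A' is any pseudo-inverse of A. -/
open Submodule Module Polynomial

variable {F V V' : Type*} [Field F] [AddCommGroup V] [Module F V]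
  [AddCommGroup V'] [Module F V']

lemma aux_exists_eval_ne_zero {F : Type*} [Field F] {n : ℕ}
    (hF : (n : Cardinal) < Cardinal.mk F)
    {q : F[X]} (hq : q ≠ 0) (hdeg : q.natDegree ≤ n) : ∃ t : F, q.eval t ≠ 0 := by
  classical
  by_contra h
  push_neg at h
  have hsub : (Set.univ : Set F) ⊆ ↑q.roots.toFinset := by
    intro t _
    simp only [Multiset.mem_toFinset, Finset.coe_sort_coe, Finset.mem_coe]
    exact (Polynomial.mem_roots hq).mpr (h t)
  have hfin : Finite F :=
    Set.finite_univ_iff.mp ((q.roots.toFinset.finite_toSet).subset hsub)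
  haveI := Fintype.ofFinite F
  have hcard : Fintype.card F ≤ n := by
    calc Fintype.card F = Finset.univ.card := rfl
      _ ≤ q.roots.toFinset.card :=
          Finset.card_le_card (fun t _ => by
            simpa using hsub (Set.mem_univ t))
      _ ≤ Multiset.card q.roots := q.roots.toFinset_card_le
      _ ≤ q.natDegree := q.card_roots'
      _ ≤ n := hdeg
  rw [Cardinal.mk_fintype] at hF
  exact absurd hF (not_lt.mpr (Nat.cast_le.mpr hcard))

lemma aux_natDegree_det_le {F : Type*} [Field F] {k : ℕ}
    (N : Matrix (Fin k) (Fin k) F[X]) (d : Fin k → ℕ)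
    (h : ∀ i j, (N i j).natDegree ≤ d j) : N.det.natDegree ≤ ∑ j, d j := by
  rw [Matrix.det_apply]
  refine Polynomial.natDegree_sum_le_of_forall_le _ _ fun σ _ => ?_
  have h1 : (Equiv.Perm.sign σ • ∏ i, N (σ i) i)
      = ((Equiv.Perm.sign σ : ℤ) : F[X]) * ∏ i, N (σ i) i := by
    rw [Units.smul_def, zsmul_eq_mul]
  rw [h1]
  refine (Polynomial.natDegree_mul_le).trans ?_
  rw [Polynomial.natDegree_intCast, zero_add]
  exact (Polynomial.natDegree_prod_le Finset.univ fun i => N (σ i) i).trans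
    (Finset.sum_le_sum fun j _ => h (σ j) j)

lemma aux_tele {F V' : Type*} [Field F] [AddCommGroup V'] [Module F V']
    (P M : Module.End F V') (t : F) (k : V') (hk : P k = 0) (m : ℕ) :
    1 ≤ m → (∀ j, 1 ≤ j → j < m → P ((M^j) k) = (M^j) k) →
    (P + t • M) (∑ j ∈ Finset.range m, (-t)^j • ((M^j) k))
      = (-(-t)^m) • ((M^m) k) := by
  induction m with
  | zero => intro h; omega
  | succ m ih =>
    intro _ hW
    by_cases hm0 : m = 0
    · subst hm0
      simp [hk, pow_one]
    · have hm1 : 1 ≤ m := by omega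
      rw [Finset.sum_range_succ, map_add]
      rw [ih hm1 (fun j h1 h2 => hW j h1 (by omega))]
      have hPm : P ((M^m) k) = (M^m) k := hW m hm1 (by omega)
      have hMM : M ((M^m) k) = (M^(m+1)) k := by
        rw [pow_succ', Module.End.mul_apply]
      simp only [LinearMap.add_apply, LinearMap.smul_apply, map_smul, hPm, hMM]
      module

/-- Key rank bound: if `L` maps `K ⊔ U` into `U`, with `K ⊓ U = ⊥`, then
`rank L ≤ dim V' - dim K`. -/
lemma aux_rank_bound {F V' : Type*} [Field F] [AddCommGroup V'] [Module F V']
    [FiniteDimensional F V'] (L : Module.End F V') (K U : Submodule F V')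
    (hdisj : K ⊓ U = ⊥) (hmap : ∀ v ∈ K ⊔ U, L v ∈ U) :
    finrank F (LinearMap.range L) + finrank F K ≤ finrank F V' := by
  set D : Submodule F V' := K ⊔ U with hD
  let L' : D →ₗ[F] U := L.restrict hmap
  have e1 : finrank F (LinearMap.range L') + finrank F (LinearMap.ker L')
      = finrank F D := LinearMap.finrank_range_add_finrank_ker L'
  have e2 : finrank F (LinearMap.range L') ≤ finrank F U :=
    (LinearMap.range L').finrank_le
  have e3 : finrank F D = finrank F K + finrank F U := by
    have := Submodule.finrank_sup_add_finrank_inf_eq K U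
    rw [hdisj] at this
    simpa using this
  have e5 : Submodule.map D.subtype (LinearMap.ker L') ≤ LinearMap.ker L := by
    rintro v ⟨x, hx, rfl⟩
    have hx' : L' x = 0 := hx
    have : ((L' x : U) : V') = 0 := by rw [hx']; rfl
    rw [LinearMap.restrict_apply] at this
    exact LinearMap.mem_ker.mpr this
  have e4 : finrank F (LinearMap.ker L') ≤ finrank F (LinearMap.ker L) := by
    rw [← Submodule.finrank_map_subtype_eq D (LinearMap.ker L')]
    exact Submodule.finrank_mono e5
  have e7 : finrank F (LinearMap.range L) + finrank F (LinearMap.ker L)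
      = finrank F V' := LinearMap.finrank_range_add_finrank_ker L
  omega

/-- Stabilization of the chain `R j = ∑_{1 ≤ i ≤ j} M^i K` gives an `M`-invariant
subspace `U ≤ W` containing `M K`. -/
lemma aux_invariant {F V' : Type*} [Field F] [AddCommGroup V'] [Module F V']
    [FiniteDimensional F V'] (M : Module.End F V') (K W : Submodule F V')
    {n : ℕ} (hn' : finrank F V' = n)
    (hWK : finrank F W + finrank F K = n)
    (h : ∀ i, 1 ≤ i → i ≤ n → Submodule.map (M ^ i) K ≤ W) :
    ∃ U : Submodule F V', U ≤ W ∧ Submodule.map M K ≤ U ∧ Submodule.map M U ≤ U := by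
  classical
  by_cases hKbot : K = ⊥
  · exact ⟨⊥, bot_le, by simp [hKbot], by simp⟩
  set R : ℕ → Submodule F V' :=
    fun j => (Finset.Icc 1 j).sup fun i => Submodule.map (M ^ i) K with hR
  have hmem : ∀ i j, 1 ≤ i → i ≤ j → Submodule.map (M ^ i) K ≤ R j := by
    intro i j h1 h2
    simp only [hR]
    exact Finset.le_sup (f := fun i => Submodule.map (M ^ i) K) (Finset.mem_Icc.mpr ⟨h1, h2⟩)
  have hRle : ∀ j, j ≤ n → R j ≤ W := by
    intro j hj
    simp only [hR]
    exact Finset.sup_le fun i hi => h i (Finset.mem_Icc.mp hi).1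
      ((Finset.mem_Icc.mp hi).2.trans hj)
  have hmapR : ∀ j, Submodule.map M (R j) ≤ R (j + 1) := by
    intro j
    have heq : Submodule.map M (R j)
        = (Finset.Icc 1 j).sup fun i => Submodule.map M (Submodule.map (M ^ i) K) := by
      simp only [hR]
      exact Finset.comp_sup_eq_sup_comp (Submodule.map M)
        (fun p q => Submodule.map_sup p q M) (Submodule.map_bot M)
    rw [heq]
    refine Finset.sup_le fun i hi => ?_
    rw [← Submodule.map_comp, ← Module.End.mul_eq_comp, ← pow_succ']
    obtain ⟨h1, h2⟩ := Finset.mem_Icc.mp hi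
    exact hmem (i + 1) (j + 1) (by omega) (by omega)
  have hK1 : finrank F K ≠ 0 := fun h0 => hKbot (Submodule.finrank_eq_zero.mp h0)
  have hn1 : 1 ≤ n := by omega
  have hRmono : ∀ j, R j ≤ R (j + 1) := by
    intro j
    simp only [hR]
    exact Finset.sup_mono (Finset.Icc_subset_Icc_right (by omega))
  have hj : ∃ j, 1 ≤ j ∧ j ≤ n ∧ R (j + 1) ≤ R j := by
    by_contra hcon
    push_neg at hcon
    have hstrict : ∀ j, 1 ≤ j → j ≤ n → R j < R (j + 1) :=
      fun j h1 h2 => lt_of_le_not_ge (hRmono j) (hcon j h1 h2)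
    have hR1 : R 1 ≠ ⊥ := by
      intro h0
      have hMK : Submodule.map M K = ⊥ := by
        have := hmem 1 1 le_rfl le_rfl
        rw [h0, pow_one] at this
        exact le_bot_iff.mp this
      have hle : R 2 ≤ R 1 := by
        have h21 : R 2 = (Finset.Icc 1 2).sup fun i => Submodule.map (M ^ i) K := by
          simp only [hR]
        rw [h21]
        refine Finset.sup_le fun i hi => ?_
        obtain ⟨h1, h2⟩ := Finset.mem_Icc.mp hi
        interval_cases i
        · exact hmem 1 1 le_rfl le_rfl
        · have : Submodule.map (M ^ 2) K = ⊥ := by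
            rw [pow_two, Module.End.mul_eq_comp, Submodule.map_comp, hMK,
              Submodule.map_bot]
          rw [this]
          exact bot_le
      exact absurd hle (hcon 1 le_rfl hn1)
    have hge : ∀ j, 1 ≤ j → j ≤ n → j ≤ finrank F (R j) := by
      intro j
      induction j with
      | zero => omega
      | succ j ih =>
        intro _ h2
        by_cases hj0 : j = 0
        · subst hj0
          have : finrank F (R (0 + 1)) ≠ 0 :=
            fun h0 => hR1 (Submodule.finrank_eq_zero.mp h0)
          omega
        · have h1j : 1 ≤ j := by omega
          have := ih h1j (by omega)
          have := Submodule.finrank_lt_finrank_of_lt (hstrict j h1j (by omega))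
          omega
    have h1 : n ≤ finrank F (R n) := hge n hn1 le_rfl
    have h2 : finrank F (R n) ≤ finrank F W := Submodule.finrank_mono (hRle n le_rfl)
    omega
  obtain ⟨j, hj1, hjn, hjs⟩ := hj
  refine ⟨R j, hRle j hjn, ?_, (hmapR j).trans hjs⟩
  have := hmem 1 j le_rfl hj1
  rwa [pow_one] at this

theorem stmt12 [FiniteDimensional F V] [FiniteDimensional F V']
    (n : ℕ) (hn : finrank F V = n) (hn' : finrank F V' = n)
    (hF : (n : Cardinal) < Cardinal.mk F)
    (A B : V →ₗ[F] V')
    -- A' is a pseudo-inverse of A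
    (A' : V' →ₗ[F] V) (hbij : Function.Bijective A')
    (hpinv : ∀ w ∈ LinearMap.range A, A (A' w) = w) :
    (∀ C ∈ Submodule.span F ({A, B} : Set (V →ₗ[F] V')),
        finrank F (LinearMap.range C) ≤ finrank F (LinearMap.range A)) ↔
    (∀ i, 1 ≤ i → i ≤ n →
        Submodule.map (((B ∘ₗ A' : Module.End F V')) ^ i)
          (LinearMap.ker (A ∘ₗ A')) ≤ LinearMap.range A) := by
  classical
  set M : Module.End F V' := B ∘ₗ A' with hM
  set P : Module.End F V' := A ∘ₗ A' with hP
  set W : Submodule F V' := LinearMap.range A with hW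
  set K : Submodule F V' := LinearMap.ker P with hK
  set r : ℕ := finrank F W with hr
  have hPw : ∀ w ∈ W, P w = w := fun w hw => hpinv w hw
  have hPmem : ∀ v : V', P v ∈ W := fun v => ⟨A' v, rfl⟩
  have hrk : r + finrank F K = n := by
    have h1 : LinearMap.range P = W := by
      rw [hP, hW, LinearMap.range_comp, LinearMap.range_eq_top.mpr hbij.2,
        Submodule.map_top]
    rw [hr, ← h1, hK, ← hn']
    exact LinearMap.finrank_range_add_finrank_ker P
  have hcomb : ∀ (a b : F),
      LinearMap.range (a • A + b • B)
        = LinearMap.range ((a • P + b • M : Module.End F V')) := by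
    intro a b
    have heq : (a • P + b • M : Module.End F V') = (a • A + b • B) ∘ₗ A' := by
      ext v
      simp [hP, hM]
    rw [heq, LinearMap.range_comp, LinearMap.range_eq_top.mpr hbij.2,
      Submodule.map_top]
  constructor
  · -- hard direction
    intro hmax
    by_contra hcon
    push_neg at hcon
    obtain ⟨i₀, hi₀1, hi₀n, hi₀⟩ := hcon
    have hex : ∃ m, 1 ≤ m ∧ ¬ Submodule.map (M ^ m) K ≤ W := ⟨i₀, hi₀1, hi₀⟩
    set m := Nat.find hex with hm
    obtain ⟨hm1, hmW⟩ := Nat.find_spec hex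
    have hmlt : ∀ i, 1 ≤ i → i < m → Submodule.map (M ^ i) K ≤ W := by
      intro i h1 h2
      by_contra hq
      exact Nat.find_min hex h2 ⟨h1, hq⟩
    obtain ⟨k₀, hk₀K, hk₀W⟩ : ∃ k₀, k₀ ∈ K ∧ (M ^ m) k₀ ∉ W := by
      by_contra hq
      push_neg at hq
      exact hmW (Submodule.map_le_iff_le_comap.mpr fun x hx =>
        Submodule.mem_comap.mpr (hq x hx))
    have hrn : r + 1 ≤ n := by
      have hk0 : k₀ ≠ 0 := by
        intro h0
        apply hk₀W
        rw [h0, map_zero]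
        exact W.zero_mem
      have hKne : K ≠ ⊥ := by
        intro h0
        rw [h0] at hk₀K
        exact hk0 ((Submodule.mem_bot F).mp hk₀K)
      have : finrank F K ≠ 0 := fun h0 => hKne (Submodule.finrank_eq_zero.mp h0)
      omega
    set vm : V' := (M ^ m) k₀ with hvm
    -- a linear functional vanishing on W with value 1 at vm
    have hquot : W.mkQ vm ≠ 0 := by
      rw [Submodule.mkQ_apply, Ne, Submodule.Quotient.mk_eq_zero]
      exact hk₀W
    obtain ⟨g, hg⟩ : ∃ g : Module.Dual F (V' ⧸ W), g (W.mkQ vm) ≠ 0 := by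
      by_contra hq
      push_neg at hq
      exact hquot ((Module.forall_dual_apply_eq_zero_iff F _).mp hq)
    set f : Module.Dual F V' := (g (W.mkQ vm))⁻¹ • (g ∘ₗ W.mkQ) with hf
    have hfW : ∀ u ∈ W, f u = 0 := by
      intro u hu
      have h0 : W.mkQ u = 0 := by
        rw [Submodule.mkQ_apply]
        exact (Submodule.Quotient.mk_eq_zero W).mpr hu
      simp [hf, h0]
    have hfv : f vm = 1 := by
      rw [hf]
      simp only [LinearMap.smul_apply, LinearMap.coe_comp, Function.comp_apply,
        smul_eq_mul]
      exact inv_mul_cancel₀ hg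
    -- a basis of W and coordinate functionals
    let bW : Basis (Fin r) F W := Module.finBasisOfFinrankEq F W hr.symm
    let w : Fin r → V' := fun j => (bW j : V')
    have hwW : ∀ j, w j ∈ W := fun j => (bW j).2
    let Pc : V' →ₗ[F] W := P.codRestrict W hPmem
    set φ : Fin (r+1) → Module.Dual F V' :=
      Fin.lastCases f (fun s => (bW.coord s) ∘ₗ Pc) with hφ
    have hφcast : ∀ (s : Fin r) (v : V'), φ s.castSucc v = bW.coord s (Pc v) := by
      intro s v
      simp [hφ]
    have hφlast : ∀ v : V', φ (Fin.last r) v = f v := by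
      intro v
      simp [hφ]
    have hφw : ∀ (s j : Fin r), φ s.castSucc (w j) = if s = j then 1 else 0 := by
      intro s j
      rw [hφcast]
      have hPc : Pc (w j) = bW j := by
        apply Subtype.ext
        simp only [Pc, LinearMap.codRestrict_apply]
        exact hPw (w j) (hwW j)
      rw [hPc, Basis.coord_apply, Basis.repr_self]
      simp [Finsupp.single_apply, eq_comm]
    -- the polynomial matrix
    set N : Matrix (Fin (r+1)) (Fin (r+1)) F[X] := fun s j =>
      Fin.lastCases (motive := fun _ => F[X]) (Polynomial.C (φ s vm))
        (fun j' => Polynomial.C (φ s (w j')) + Polynomial.C (φ s (M (w j'))) * X) j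
      with hN
    have hNlast : ∀ s, N s (Fin.last r) = Polynomial.C (φ s vm) := by
      intro s
      simp [hN]
    have hNcast : ∀ s (j' : Fin r), N s j'.castSucc
        = Polynomial.C (φ s (w j')) + Polynomial.C (φ s (M (w j'))) * X := by
      intro s j'
      simp [hN]
    have hevaldet : ∀ t : F, Polynomial.eval t N.det = (N.map (Polynomial.eval t)).det := by
      intro t
      rw [← Polynomial.coe_evalRingHom, RingHom.map_det, RingHom.mapMatrix_apply]
    have hdet0 : (N.map (Polynomial.eval 0)).det = 1 := by
      have htri : (N.map (Polynomial.eval 0)).BlockTriangular id := by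
        intro s j hlt
        simp only [id] at hlt
        induction j using Fin.lastCases with
        | last => exact absurd hlt (Fin.le_last s).not_gt
        | cast j' =>
          rw [Matrix.map_apply, hNcast]
          simp only [Polynomial.eval_add, Polynomial.eval_mul, Polynomial.eval_C,
            Polynomial.eval_X, mul_zero, add_zero]
          induction s using Fin.lastCases with
          | last => exact hφlast (w j') ▸ hfW (w j') (hwW j')
          | cast s' =>
            rw [hφw s' j', if_neg]
            intro hsj
            subst hsj
            exact lt_irrefl _ hlt
      rw [Matrix.det_of_upperTriangular htri, Fin.prod_univ_castSucc]
      have h1 : ∀ s : Fin r, Polynomial.eval 0 (N s.castSucc s.castSucc) = 1 := by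
        intro s
        rw [hNcast]
        simp [hφw s s]
      have h2 : Polynomial.eval 0 (N (Fin.last r) (Fin.last r)) = 1 := by
        rw [hNlast]
        simp [hφlast, hfv]
      simp only [Matrix.map_apply]
      rw [h2, mul_one]
      exact Finset.prod_eq_one fun s _ => h1 s
    have hNdet : N.det ≠ 0 := by
      intro h0
      have h1 := hevaldet 0
      rw [h0, hdet0] at h1
      simpa using h1
    have hdegN : N.det.natDegree ≤ r := by
      have hb := aux_natDegree_det_le N
        (fun j => Fin.lastCases (motive := fun _ => ℕ) 0 (fun _ => 1) j) ?_
      · refine hb.trans ?_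
        rw [Fin.sum_univ_castSucc]
        simp
      · intro i j
        induction j using Fin.lastCases with
        | last =>
          rw [hNlast]
          simp
        | cast j' =>
          rw [hNcast]
          simp only [Fin.lastCases_castSucc]
          refine (Polynomial.natDegree_add_le _ _).trans ?_
          simp only [Polynomial.natDegree_C, max_le_iff]
          refine ⟨Nat.zero_le _, ?_⟩
          refine (Polynomial.natDegree_mul_le).trans ?_
          simp [Polynomial.natDegree_X]
    -- choose a good scalar t
    have hq0 : (X * N.det : F[X]) ≠ 0 := mul_ne_zero Polynomial.X_ne_zero hNdet
    have hqdeg : (X * N.det : F[X]).natDegree ≤ n := by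
      refine (Polynomial.natDegree_mul_le).trans ?_
      rw [Polynomial.natDegree_X]
      omega
    obtain ⟨t, hqt⟩ := aux_exists_eval_ne_zero hF hq0 hqdeg
    rw [Polynomial.eval_mul, Polynomial.eval_X] at hqt
    obtain ⟨ht0, hgt⟩ := mul_ne_zero_iff.mp hqt
    -- the specialized map L
    set L : Module.End F V' := P + t • M with hL
    set x : V' := ∑ j ∈ Finset.range m, (-t)^j • ((M^j) k₀) with hx
    have hLx : L x = (-(-t)^m) • vm := by
      rw [hL, hx, hvm]
      exact aux_tele P M t k₀ (LinearMap.mem_ker.mp hk₀K) m hm1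
        (fun j h1 h2 => hPw _ (hmlt j h1 h2 (Submodule.mem_map_of_mem hk₀K)))
    set z : Fin (r+1) → V' := Fin.lastCases x w with hz
    have hzl : z (Fin.last r) = x := by simp [hz]
    have hzc : ∀ j' : Fin r, z j'.castSucc = w j' := by
      intro j'
      simp [hz]
    set G : Matrix (Fin (r+1)) (Fin (r+1)) F := fun s j => φ s (L (z j)) with hG
    have hc : -(-t)^m ≠ 0 := neg_ne_zero.mpr (pow_ne_zero m (neg_ne_zero.mpr ht0))
    have hGeq : G = (N.map (Polynomial.eval t)).updateCol (Fin.last r)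
        ((-(-t)^m) • fun s => (N.map (Polynomial.eval t)) s (Fin.last r)) := by
      ext s j
      have hGsj : G s j = φ s (L (z j)) := by rw [hG]
      induction j using Fin.lastCases with
      | last =>
        rw [hGsj, Matrix.updateCol_apply, if_pos rfl]
        simp only [Pi.smul_apply, Matrix.map_apply, hNlast, smul_eq_mul,
          Polynomial.eval_C]
        rw [hzl, hLx, map_smul, smul_eq_mul]
      | cast j' =>
        rw [hGsj, Matrix.updateCol_apply, if_neg (Fin.castSucc_lt_last j').ne]
        rw [hzc, Matrix.map_apply, hNcast]
        have hLw : L (w j') = w j' + t • M (w j') := by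
          rw [hL]
          simp [hPw (w j') (hwW j')]
        rw [hLw, map_add, map_smul]
        simp only [Polynomial.eval_add, Polynomial.eval_mul, Polynomial.eval_C,
          Polynomial.eval_X, smul_eq_mul]
        ring
    have hGdet : G.det ≠ 0 := by
      rw [hGeq, Matrix.det_updateCol_smul, Matrix.updateCol_eq_self,
        ← hevaldet]
      exact mul_ne_zero hc hgt
    -- linear independence of the r+1 images
    have hli : LinearIndependent F (fun j => L (z j)) := by
      rw [Fintype.linearIndependent_iff]
      intro c hc0 j
      have hGapp : ∀ s j, G s j = φ s (L (z j)) := fun s j => by rw [hG]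
      have hmv : G.mulVec c = 0 := by
        funext s
        have h1 := congrArg (φ s) hc0
        rw [map_sum, map_zero] at h1
        simp only [map_smul, smul_eq_mul] at h1
        rw [Matrix.mulVec, Pi.zero_apply, dotProduct]
        calc ∑ j, G s j * c j = ∑ j, c j * φ s (L (z j)) := by
              refine Finset.sum_congr rfl fun j _ => ?_
              rw [hGapp]
              ring
          _ = 0 := h1
      exact congrFun (Matrix.eq_zero_of_mulVec_eq_zero hGdet hmv) j
    have hsp : finrank F (span F (Set.range fun j => L (z j))) = r + 1 := by
      rw [finrank_span_eq_card hli, Fintype.card_fin]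
    have hsple : span F (Set.range fun j => L (z j)) ≤ LinearMap.range L := by
      rw [Submodule.span_le]
      rintro _ ⟨j, rfl⟩
      exact ⟨z j, rfl⟩
    have hrankL : r + 1 ≤ finrank F (LinearMap.range L) := by
      rw [← hsp]
      exact Submodule.finrank_mono hsple
    have hmemAB : A + t • B ∈ span F ({A, B} : Set (V →ₗ[F] V')) :=
      Submodule.mem_span_pair.mpr ⟨1, t, by rw [one_smul]⟩
    have hfin := hmax (A + t • B) hmemAB
    have h1AB : LinearMap.range (A + t • B) = LinearMap.range L := by
      have h2 := hcomb 1 t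
      rw [one_smul, one_smul] at h2
      rw [h2, hL]
    rw [h1AB] at hfin
    omega
  · intro h C hC
    obtain ⟨a, b, hab⟩ := Submodule.mem_span_pair.mp hC
    rw [← hab, hcomb a b]
    obtain ⟨U, hUW, hMKU, hMUU⟩ := aux_invariant M K W hn' (hr ▸ hrk) h
    have hdisj : K ⊓ U = ⊥ := by
      rw [eq_bot_iff]
      rintro v ⟨hvK, hvU⟩
      have h1 : P v = v := hPw v (hUW hvU)
      have h2 : P v = 0 := LinearMap.mem_ker.mp hvK
      simpa [h2] using h1.symm
    have hmap : ∀ v ∈ K ⊔ U, (a • P + b • M) v ∈ U := by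
      have : K ⊔ U ≤ Submodule.comap (a • P + b • M) U := by
        refine sup_le ?_ ?_
        · intro k hk
          have h0 : P k = 0 := LinearMap.mem_ker.mp hk
          have : (a • P + b • M) k = b • M k := by
            simp [h0]
          simp only [Submodule.mem_comap, this]
          exact Submodule.smul_mem _ _ (hMKU ⟨k, hk, rfl⟩)
        · intro u hu
          have h0 : P u = u := hPw u (hUW hu)
          have : (a • P + b • M) u = a • u + b • M u := by
            simp [h0]
          simp only [Submodule.mem_comap, this]
          exact Submodule.add_mem _ (Submodule.smul_mem _ _ hu)
            (Submodule.smul_mem _ _ (hMUU ⟨u, hu, rfl⟩))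
      exact fun v hv => this hv
    have := aux_rank_bound (a • P + b • M) K U hdisj hmap
    omega
end
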